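/- Let M ⊆ ℚ^n be a monoid and suppose M ⊆ V₁ ∪ ... ∪ V_k where each V_j is a vector subspace of ℚ^n (k ≥ 1). Then there exists j with M ⊆ V_j. -/

import Mathlib

/-- A monoid of ℚ^n: a set containing 0 and closed under addition. -/
def IsMonoidSet {n : ℕ} (M : Set (Fin n → ℚ)) : Prop :=
  (0 : Fin n → ℚ) ∈ M ∧ ∀ x ∈ M, ∀ y ∈ M, x + y ∈ M

lemma monoid_nsmul_add {n : ℕ} {M : Set (Fin n → ℚ)} (hM : IsMonoidSet M)
    {x y : Fin n → ℚ} (hx : x ∈ M) (hy : y ∈ M) : ∀ m : ℕ, (m : ℚ) • x + y ∈ M := by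
  intro m
  induction m with
  | zero => simpa using hy
  | succ m ih =>
    have : ((m : ℚ) + 1) • x + y = x + ((m : ℚ) • x + y) := by
      rw [add_smul, one_smul]; ring
    rw [Nat.cast_succ, this]
    exact hM.2 _ hx _ ih

lemma aux5 {n : ℕ} : ∀ (k : ℕ) (M : Set (Fin n → ℚ)), IsMonoidSet M →
    ∀ (V : Fin (k + 1) → Submodule ℚ (Fin n → ℚ)),
    M ⊆ ⋃ j, (V j : Set (Fin n → ℚ)) → ∃ j, M ⊆ (V j : Set (Fin n → ℚ)) := by
  intro k
  induction k with
  | zero =>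
    intro M hM V h
    refine ⟨0, fun z hz => ?_⟩
    obtain ⟨j, hj⟩ := Set.mem_iUnion.1 (h hz)
    rwa [Fin.fin_one_eq_zero j] at hj
  | succ k ih =>
    intro M hM V h
    by_cases hlast : M ⊆ (V (Fin.last (k + 1)) : Set (Fin n → ℚ))
    · exact ⟨Fin.last (k + 1), hlast⟩
    · skip
      obtain ⟨x, hxM, hxV⟩ := Set.not_subset.1 hlast
      have key : M ⊆ ⋃ j : Fin (k + 1), ((V j.castSucc : Submodule ℚ (Fin n → ℚ)) :
          Set (Fin n → ℚ)) := by
        intro y hy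
        -- consider m • x + y for all m
        have hmem : ∀ m : ℕ, ∃ j, (m : ℚ) • x + y ∈ V j := fun m =>
          Set.mem_iUnion.1 (h (monoid_nsmul_add hM hxM hy m))
        choose f hf using hmem
        obtain ⟨a, b, hab, hfab⟩ := Finite.exists_ne_map_eq_of_infinite f
        -- WLOG the subspace V (f a) contains ((a-b) : ℚ) • x
        have hsub : ((a : ℚ) - b) • x ∈ V (f a) := by
          have h1 := hf a
          have h2 := hf b
          rw [← hfab] at h2
          have := (V (f a)).sub_mem h1 h2
          simpa [sub_smul] using this
        have hane : ((a : ℚ) - b) ≠ 0 := by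
          simp only [ne_eq, sub_eq_zero, Nat.cast_inj]
          exact hab
        have hxVfa : x ∈ V (f a) := by
          have := (V (f a)).smul_mem ((a : ℚ) - b)⁻¹ hsub
          rwa [smul_smul, inv_mul_cancel₀ hane, one_smul] at this
        have hjne : f a ≠ Fin.last (k + 1) := by
          intro hEq; exact hxV (hEq ▸ hxVfa)
        have hyV : y ∈ V (f a) := by
          have := (V (f a)).sub_mem (hf a) ((V (f a)).smul_mem (a : ℚ) hxVfa)
          simpa using this
        obtain ⟨j, hj⟩ := Fin.exists_castSucc_eq.2 hjne
        exact Set.mem_iUnion.2 ⟨j, by rwa [← hj] at hyV⟩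
      obtain ⟨j, hj⟩ := ih M hM (fun j => V j.castSucc) key
      exact ⟨j.castSucc, hj⟩

theorem stmt5 {n k : ℕ} (hk : 1 ≤ k) (M : Set (Fin n → ℚ)) (hM : IsMonoidSet M)
    (V : Fin k → Submodule ℚ (Fin n → ℚ))
    (h : M ⊆ ⋃ j, (V j : Set (Fin n → ℚ))) :
    ∃ j, M ⊆ (V j : Set (Fin n → ℚ)) := by
  obtain ⟨k, rfl⟩ : ∃ k', k = k' + 1 := ⟨k - 1, (Nat.succ_pred_eq_of_pos hk).symm⟩
  exact aux5 k M hM V h
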